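/- For every integer q ≥ 1, every integer p coprime to q, and every natural number m, the sum over k from m+1 to m+q of sgn(sin(kπp/q))·cos(kπp/q) equals 0. -/

import Mathlib

open Real Finset

lemma f_periodic : Function.Periodic (fun x => Real.sign (Real.sin x) * Real.cos x) Real.pi := by
  intro x
  simp [Real.sin_add_pi, Real.cos_add_pi, Real.sign_neg]

theorem stmt_1 (p : ℤ) (q : ℕ) (hq : 1 ≤ q) (hpq : Int.gcd p q = 1) (m : ℕ) :
    ∑ k ∈ Finset.Icc (m + 1) (m + q),
      Real.sign (Real.sin (k * Real.pi * p / q)) * Real.cos (k * Real.pi * p / q) = 0 := by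
  have hq0 : (0:ℤ) < q := by exact_mod_cast hq
  have hqR : (0:ℝ) < q := by exact_mod_cast hq
  set g : ℕ → ℝ := fun j => Real.sign (Real.sin (j * Real.pi / q)) * Real.cos (j * Real.pi / q)
    with hg
  set i : ℕ → ℕ := fun k => (((k : ℤ) * p) % q).toNat with hi
  -- each term equals g (i k)
  have key : ∀ k : ℕ, Real.sign (Real.sin (k * Real.pi * p / q)) * Real.cos (k * Real.pi * p / q)
      = g (i k) := by
    intro k
    have hdiv : (k : ℤ) * p = ((k : ℤ) * p) % q + q * (((k : ℤ) * p) / q) :=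
      (Int.emod_add_mul_ediv _ _).symm
    have hnn : 0 ≤ ((k : ℤ) * p) % q := Int.emod_nonneg _ hq0.ne'
    have hik : ((i k : ℤ)) = ((k : ℤ) * p) % q := Int.toNat_of_nonneg hnn
    have hx : (k : ℝ) * Real.pi * p / q
        = (i k : ℝ) * Real.pi / q + (((k : ℤ) * p) / q : ℤ) * Real.pi := by
      have h : ((k : ℤ) * p : ℝ) = ((i k : ℤ) : ℝ) + (q : ℝ) * ((((k : ℤ) * p) / q : ℤ) : ℝ) := by
        rw [hik]; exact_mod_cast hdiv
      push_cast at h ⊢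
      field_simp
      linear_combination h
    rw [hx]
    exact f_periodic.int_mul _ _
  -- i is injective on the interval
  have hinj : Set.InjOn i (Finset.Icc (m + 1) (m + q)) := by
    intro a ha b hb hab
    simp only [Finset.coe_Icc, Set.mem_Icc] at ha hb
    have hmod : ((a : ℤ) * p) % q = ((b : ℤ) * p) % q := by
      have := congrArg (fun n : ℕ => (n : ℤ)) hab
      simpa [hi, Int.toNat_of_nonneg (Int.emod_nonneg _ hq0.ne'),
        Int.toNat_of_nonneg (Int.emod_nonneg ((b:ℤ)*p) hq0.ne')] using this
    have hdvd : (q : ℤ) ∣ ((a : ℤ) - b) * p := by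
      have h1 : ((a : ℤ) * p - (b : ℤ) * p) % q = 0 := by
        rw [Int.sub_emod, hmod, sub_self, Int.zero_emod]
      have h2 : (q:ℤ) ∣ (a : ℤ) * p - (b : ℤ) * p := Int.dvd_of_emod_eq_zero h1
      simpa [sub_mul] using h2
    have hcop : IsCoprime (q : ℤ) p := by
      rw [Int.isCoprime_iff_gcd_eq_one, Int.gcd_comm]
      exact_mod_cast hpq
    have hdvd2 : (q : ℤ) ∣ ((a : ℤ) - b) := hcop.dvd_of_dvd_mul_right hdvd
    obtain ⟨c, hc⟩ := hdvd2
    have ha1 : (m:ℤ) + 1 ≤ a := by exact_mod_cast ha.1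
    have ha2 : (a:ℤ) ≤ m + q := by exact_mod_cast ha.2
    have hb1 : (m:ℤ) + 1 ≤ b := by exact_mod_cast hb.1
    have hb2 : (b:ℤ) ≤ m + q := by exact_mod_cast hb.2
    have : (a : ℤ) = b := by
      rcases lt_trichotomy c 0 with h | h | h
      · have hcle : c ≤ -1 := by omega
        have : (q:ℤ) * c ≤ (q:ℤ) * (-1) := mul_le_mul_of_nonneg_left hcle hq0.le
        linarith
      · simp [h] at hc; linarith
      · have hcge : 1 ≤ c := by omega
        have : (q:ℤ) * 1 ≤ (q:ℤ) * c := mul_le_mul_of_nonneg_left hcge hq0.le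
        linarith
    exact_mod_cast this
  -- image of the interval under i is range q
  have himg : Finset.image i (Finset.Icc (m + 1) (m + q)) = Finset.range q := by
    apply Finset.eq_of_subset_of_card_le
    · intro j hj
      simp only [Finset.mem_image] at hj
      obtain ⟨k, _, hk⟩ := hj
      have h1 : ((k : ℤ) * p) % q < q := Int.emod_lt_of_pos _ hq0
      have hnn : 0 ≤ ((k : ℤ) * p) % q := Int.emod_nonneg _ hq0.ne'
      simp only [hi] at hk
      simp only [Finset.mem_range]
      omega
    · rw [Finset.card_range, Finset.card_image_of_injOn hinj]
      simp [Nat.card_Icc]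
  have hg0 : g 0 = 0 := by simp [hg]
  have hmid : ∑ j ∈ Finset.Ico 1 q, g j = 0 := by
    refine Finset.sum_involution (fun a _ => q - a) ?_ ?_ ?_ ?_
    · intro a ha
      simp only [Finset.mem_Ico] at ha
      have h1 : (1:ℝ) ≤ a := by exact_mod_cast ha.1
      have h2 : (a:ℝ) < q := by exact_mod_cast ha.2
      have hcast : ((q - a : ℕ) : ℝ) = (q:ℝ) - a := by
        rw [Nat.cast_sub (le_of_lt ha.2)]
      have hpos1 : 0 < (a:ℝ) * Real.pi / q := by positivity
      have hlt1 : (a:ℝ) * Real.pi / q < Real.pi := by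
        rw [div_lt_iff₀ hqR]
        nlinarith [Real.pi_pos]
      have harg : ((q - a : ℕ) : ℝ) * Real.pi / q = Real.pi - (a:ℝ) * Real.pi / q := by
        rw [hcast]; field_simp
      have hsin1 : 0 < Real.sin ((a:ℝ) * Real.pi / q) :=
        Real.sin_pos_of_pos_of_lt_pi hpos1 hlt1
      have hsin2 : 0 < Real.sin (((q - a : ℕ) : ℝ) * Real.pi / q) := by
        rw [harg, Real.sin_pi_sub]; exact hsin1
      simp only [hg]
      rw [Real.sign_of_pos hsin1, Real.sign_of_pos hsin2, harg, Real.cos_pi_sub]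
      ring
    · intro a ha hne
      simp only [Finset.mem_Ico] at ha
      intro heq
      apply hne
      have heq' : q - a = a := heq
      have h2a : 2 * a = q := by omega
      have : (a:ℝ) * Real.pi / q = Real.pi / 2 := by
        have : (q:ℝ) = 2 * a := by exact_mod_cast h2a.symm
        rw [this]
        have ha0 : (0:ℝ) < a := by
          have := ha.1; exact_mod_cast Nat.lt_of_lt_of_le Nat.zero_lt_one this
        field_simp
      simp [hg, this]
    · intro a ha
      simp only [Finset.mem_Ico] at ha
      show q - a ∈ Finset.Ico 1 q
      simp only [Finset.mem_Ico]
      omega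
    · intro a ha
      simp only [Finset.mem_Ico] at ha
      show q - (q - a) = a
      omega
  calc ∑ k ∈ Finset.Icc (m + 1) (m + q),
        Real.sign (Real.sin (k * Real.pi * p / q)) * Real.cos (k * Real.pi * p / q)
      = ∑ k ∈ Finset.Icc (m + 1) (m + q), g (i k) :=
        Finset.sum_congr rfl fun k _ => key k
    _ = ∑ j ∈ Finset.range q, g j := by
        rw [← himg, Finset.sum_image hinj]
    _ = 0 := by
        rw [Finset.range_eq_Ico, ← Finset.sum_Ico_consecutive g (Nat.zero_le 1) hq, hmid,
          show Finset.Ico 0 1 = {0} from rfl, Finset.sum_singleton, hg0, zero_add]
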